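/- arXiv:2106.15929 — 2 statements merged into one kernel-verified Lean document; each statement's English description precedes it below -/
import Mathlib

section
/- Let H : ℝⁿ ⇉ ℝⁿ be a convex process such that dom(H) + R₋ = ℝⁿ, where R₋ is the reachable set of the minimal linear process L₋ associated with H. Then H is null-controllable if and only if N(H) − R(H) = ℝⁿ. -/
open Pointwise Set RealInnerProductSpace

namespace ConvexProcessPaper

/-- A convex cone: a nonempty convex set closed under nonnegative scalar multiplication. -/
def IsConvexCone {V : Type*} [AddCommMonoid V] [Module ℝ V] (S : Set V) : Prop :=
  S.Nonempty ∧ Convex ℝ S ∧ ∀ c : ℝ, 0 ≤ c → ∀ x ∈ S, c • x ∈ S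

/-- A set is a linear subspace. -/
def IsLinearSubspace {V : Type*} [AddCommGroup V] [Module ℝ V] (S : Set V) : Prop :=
  ∃ W : Submodule ℝ V, (W : Set V) = S

/-- Set-valued maps from ℝⁿ to ℝⁿ. -/
abbrev SVMap (n : ℕ) := EuclideanSpace ℝ (Fin n) → Set (EuclideanSpace ℝ (Fin n))

variable {n : ℕ}

/-- The graph of a set-valued map. -/
def graph (H : SVMap n) : Set (EuclideanSpace ℝ (Fin n) × EuclideanSpace ℝ (Fin n)) :=
  {p | p.2 ∈ H p.1}

/-- A convex process: a set-valued map whose graph is a convex cone. -/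
def IsConvexProcess (H : SVMap n) : Prop := IsConvexCone (graph H)

/-- The domain of a set-valued map. -/
def dom (H : SVMap n) : Set (EuclideanSpace ℝ (Fin n)) := {x | (H x).Nonempty}

/-- The image of a set-valued map. -/
def im (H : SVMap n) : Set (EuclideanSpace ℝ (Fin n)) := {y | ∃ x, y ∈ H x}

/-- The inverse of a set-valued map: gr(H⁻¹) = {(y,x) : (x,y) ∈ gr(H)}. -/
def invMap (H : SVMap n) : SVMap n := fun y => {x | y ∈ H x}

/-- The image of a set under a set-valued map: H(S) = ⋃_{x ∈ S} H(x). -/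
def imSet (H : SVMap n) (S : Set (EuclideanSpace ℝ (Fin n))) :
    Set (EuclideanSpace ℝ (Fin n)) := ⋃ x ∈ S, H x

/-- The reachable set: R(H) = ⋃_{ℓ ≥ 0} H^ℓ({0}). -/
def reach (H : SVMap n) : Set (EuclideanSpace ℝ (Fin n)) := ⋃ ℓ : ℕ, (imSet H)^[ℓ] {0}

/-- The null-controllable set: N(H) = R(H⁻¹). -/
def nullc (H : SVMap n) : Set (EuclideanSpace ℝ (Fin n)) := reach (invMap H)

/-- The feasible set: states from which an infinite trajectory emanates. -/
def feas (H : SVMap n) : Set (EuclideanSpace ℝ (Fin n)) :=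
  {ξ | ∃ x : ℕ → EuclideanSpace ℝ (Fin n), x 0 = ξ ∧ ∀ k, x (k + 1) ∈ H (x k)}

/-- The minimal linear process L₋: gr(L₋) = lin(gr(H)) = gr(H) ∩ (−gr(H)). -/
def Lminus (H : SVMap n) : SVMap n := fun x => {y | y ∈ H x ∧ -y ∈ H (-x)}

/-- The maximal linear process L₊: gr(L₊) = Lin(gr(H)) = gr(H) − gr(H). -/
def Lplus (H : SVMap n) : SVMap n :=
  fun x => {y | ∃ x₁ y₁ x₂ y₂, y₁ ∈ H x₁ ∧ y₂ ∈ H x₂ ∧ x = x₁ - x₂ ∧ y = y₁ - y₂}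

/-- The negative dual process: p ∈ H⁻(q) ⇔ ⟨p,x⟩ ≥ ⟨q,y⟩ for all (x,y) ∈ gr(H). -/
def negDual (H : SVMap n) : SVMap n :=
  fun q => {p | ∀ x y, y ∈ H x → ⟪q, y⟫ ≤ ⟪p, x⟫}

/-- The positive dual process: p ∈ H⁺(q) ⇔ ⟨p,x⟩ ≤ ⟨q,y⟩ for all (x,y) ∈ gr(H). -/
def posDual (H : SVMap n) : SVMap n :=
  fun q => {p | ∀ x y, y ∈ H x → ⟪p, x⟫ ≤ ⟪q, y⟫}

/-- The negative polar cone of a set. -/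
def negPolar (C : Set (EuclideanSpace ℝ (Fin n))) : Set (EuclideanSpace ℝ (Fin n)) :=
  {y | ∀ x ∈ C, ⟪x, y⟫ ≤ 0}

/-- The positive polar cone of a set. -/
def posPolar (C : Set (EuclideanSpace ℝ (Fin n))) : Set (EuclideanSpace ℝ (Fin n)) :=
  {y | ∀ x ∈ C, 0 ≤ ⟪x, y⟫}

/-- C is weakly H invariant: H(x) ∩ C ≠ ∅ for all x ∈ C. -/
def WeaklyInv (H : SVMap n) (C : Set (EuclideanSpace ℝ (Fin n))) : Prop :=
  ∀ x ∈ C, (H x ∩ C).Nonempty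

/-- C is strongly H invariant: H(x) ⊆ C for all x ∈ C. -/
def StronglyInv (H : SVMap n) (C : Set (EuclideanSpace ℝ (Fin n))) : Prop :=
  ∀ x ∈ C, H x ⊆ C

/-- H is reachable: every feasible state is reachable. -/
def IsReachable (H : SVMap n) : Prop := feas H ⊆ reach H

/-- H is null-controllable: every feasible state is null-controllable. -/
def IsNullControllable (H : SVMap n) : Prop := feas H ⊆ nullc H

/-! ### Auxiliary development -/

section Aux

/-- A chain of length `ℓ` for the set-valued map `F` from `a` to `b`. -/
def ChainTo (F : SVMap n) (ℓ : ℕ) (a b : EuclideanSpace ℝ (Fin n)) : Prop :=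
  ∃ c : ℕ → EuclideanSpace ℝ (Fin n), c 0 = a ∧ c ℓ = b ∧ ∀ k < ℓ, c (k + 1) ∈ F (c k)

theorem chain_self (F : SVMap n) (a : EuclideanSpace ℝ (Fin n)) : ChainTo F 0 a a :=
  ⟨fun _ => a, rfl, rfl, fun k hk => absurd hk (Nat.not_lt_zero k)⟩

theorem chain_const {F : SVMap n} (h0 : (0 : EuclideanSpace ℝ (Fin n)) ∈ F 0) (ℓ : ℕ) :
    ChainTo F ℓ 0 0 :=
  ⟨fun _ => 0, rfl, rfl, fun _ _ => h0⟩

theorem chain_single {F : SVMap n} {x y : EuclideanSpace ℝ (Fin n)} (h : y ∈ F x) :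
    ChainTo F 1 x y := by
  refine ⟨fun k => if k = 0 then x else y, by simp, by simp, ?_⟩
  intro k hk
  interval_cases k
  simpa using h

theorem chain_concat {F : SVMap n} {ℓ p : ℕ} {a b e : EuclideanSpace ℝ (Fin n)}
    (h1 : ChainTo F ℓ a b) (h2 : ChainTo F p b e) : ChainTo F (ℓ + p) a e := by
  obtain ⟨c, hc0, hcl, hcs⟩ := h1
  obtain ⟨d, hd0, hdp, hds⟩ := h2
  have key : ∀ k, ℓ ≤ k → (if k ≤ ℓ then c k else d (k - ℓ)) = d (k - ℓ) := by
    intro k hk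
    rcases eq_or_lt_of_le hk with h | h
    · rw [if_pos (le_of_eq h.symm), ← h]
      simp [hcl, hd0]
    · rw [if_neg (by omega)]
  refine ⟨fun k => if k ≤ ℓ then c k else d (k - ℓ), by simp [hc0], ?_, ?_⟩
  · show (if ℓ + p ≤ ℓ then c (ℓ + p) else d (ℓ + p - ℓ)) = e
    rw [key (ℓ + p) (by omega)]
    simpa using hdp
  · intro k hk
    show (if k + 1 ≤ ℓ then c (k + 1) else d (k + 1 - ℓ)) ∈
      F (if k ≤ ℓ then c k else d (k - ℓ))
    by_cases h1k : k + 1 ≤ ℓ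
    · rw [if_pos h1k, if_pos (by omega)]
      exact hcs k (by omega)
    · rw [key (k + 1) (by omega), key k (by omega)]
      have he : k + 1 - ℓ = (k - ℓ) + 1 := by omega
      rw [he]
      exact hds (k - ℓ) (by omega)

theorem chain_add {F : SVMap n}
    (hadd : ∀ {x y x' y' : EuclideanSpace ℝ (Fin n)}, y ∈ F x → y' ∈ F x' → y + y' ∈ F (x + x'))
    {ℓ : ℕ} {a b a' b' : EuclideanSpace ℝ (Fin n)}
    (h1 : ChainTo F ℓ a b) (h2 : ChainTo F ℓ a' b') : ChainTo F ℓ (a + a') (b + b') := by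
  obtain ⟨c, hc0, hcl, hcs⟩ := h1
  obtain ⟨d, hd0, hdl, hds⟩ := h2
  exact ⟨fun k => c k + d k, by show c 0 + d 0 = a + a'; rw [hc0, hd0],
    by show c ℓ + d ℓ = b + b'; rw [hcl, hdl],
    fun k hk => hadd (hcs k hk) (hds k hk)⟩

theorem chain_smul {F : SVMap n} (cc : ℝ)
    (hs : ∀ {x y : EuclideanSpace ℝ (Fin n)}, y ∈ F x → cc • y ∈ F (cc • x))
    {ℓ : ℕ} {a b : EuclideanSpace ℝ (Fin n)}
    (h : ChainTo F ℓ a b) : ChainTo F ℓ (cc • a) (cc • b) := by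
  obtain ⟨c, hc0, hcl, hcs⟩ := h
  exact ⟨fun k => cc • c k, by show cc • c 0 = cc • a; rw [hc0],
    by show cc • c ℓ = cc • b; rw [hcl], fun k hk => hs (hcs k hk)⟩

theorem chain_mono {F G : SVMap n} (h : ∀ x, F x ⊆ G x) {ℓ : ℕ}
    {a b : EuclideanSpace ℝ (Fin n)} (hc : ChainTo F ℓ a b) : ChainTo G ℓ a b := by
  obtain ⟨c, hc0, hcl, hcs⟩ := hc
  exact ⟨c, hc0, hcl, fun k hk => h _ (hcs k hk)⟩

theorem chain_pad_front {F : SVMap n} (h0 : (0 : EuclideanSpace ℝ (Fin n)) ∈ F 0)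
    {ℓ K : ℕ} (hlK : ℓ ≤ K) {b : EuclideanSpace ℝ (Fin n)}
    (h : ChainTo F ℓ 0 b) : ChainTo F K 0 b := by
  have h' := chain_concat (chain_const h0 (K - ℓ)) h
  rwa [Nat.sub_add_cancel hlK] at h'

theorem chain_pad_back {F : SVMap n} (h0 : (0 : EuclideanSpace ℝ (Fin n)) ∈ F 0)
    {ℓ K : ℕ} (hlK : ℓ ≤ K) {a : EuclideanSpace ℝ (Fin n)}
    (h : ChainTo F ℓ a 0) : ChainTo F K a 0 := by
  have h' := chain_concat h (chain_const h0 (K - ℓ))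
  rwa [Nat.add_sub_cancel' hlK] at h'

theorem mem_imSet_iff {F : SVMap n} {S : Set (EuclideanSpace ℝ (Fin n))}
    {y : EuclideanSpace ℝ (Fin n)} : y ∈ imSet F S ↔ ∃ x ∈ S, y ∈ F x := by
  simp [imSet]

theorem mem_iterate_imSet {F : SVMap n} :
    ∀ (ℓ : ℕ) (S : Set (EuclideanSpace ℝ (Fin n))) (x : EuclideanSpace ℝ (Fin n)),
      x ∈ (imSet F)^[ℓ] S ↔ ∃ a ∈ S, ChainTo F ℓ a x := by
  intro ℓ
  induction ℓ with
  | zero =>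
    intro S x
    rw [Function.iterate_zero_apply]
    constructor
    · intro hx
      exact ⟨x, hx, chain_self F x⟩
    · rintro ⟨a, ha, c, hc0, hcl, -⟩
      rw [← hcl, hc0]
      exact ha
  | succ ℓ ih =>
    intro S x
    rw [Function.iterate_succ_apply']
    constructor
    · intro hx
      obtain ⟨y, hy, hxy⟩ := mem_imSet_iff.1 hx
      obtain ⟨a, ha, c, hc0, hcl, hcs⟩ := (ih S y).1 hy
      refine ⟨a, ha, fun k => if k = ℓ + 1 then x else c k,
        by show (if 0 = ℓ + 1 then x else c 0) = a; rw [if_neg (by omega)]; exact hc0,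
        by show (if ℓ + 1 = ℓ + 1 then x else c (ℓ + 1)) = x; rw [if_pos rfl], ?_⟩
      intro k hk
      show (if k + 1 = ℓ + 1 then x else c (k + 1)) ∈ F (if k = ℓ + 1 then x else c k)
      by_cases hkl : k = ℓ
      · subst hkl
        rw [if_pos rfl, if_neg (by omega), hcl]
        exact hxy
      · rw [if_neg (by omega), if_neg (by omega)]
        exact hcs k (by omega)
    · rintro ⟨a, ha, c, hc0, hcl, hcs⟩
      have hmem : c ℓ ∈ (imSet F)^[ℓ] S :=
        (ih S (c ℓ)).2 ⟨a, ha, c, hc0, rfl, fun k hk => hcs k (by omega)⟩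
      exact mem_imSet_iff.2 ⟨c ℓ, hmem, hcl ▸ hcs ℓ (by omega)⟩

theorem mem_reach_iff {F : SVMap n} {x : EuclideanSpace ℝ (Fin n)} :
    x ∈ reach F ↔ ∃ ℓ, ChainTo F ℓ 0 x := by
  unfold reach
  simp only [Set.mem_iUnion]
  constructor
  · rintro ⟨ℓ, hx⟩
    obtain ⟨a, ha, hc⟩ := (mem_iterate_imSet ℓ {0} x).1 hx
    rw [Set.mem_singleton_iff] at ha
    subst ha
    exact ⟨ℓ, hc⟩
  · rintro ⟨ℓ, hc⟩
    exact ⟨ℓ, (mem_iterate_imSet ℓ {0} x).2 ⟨0, rfl, hc⟩⟩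

theorem chain_invMap_iff {F : SVMap n} {ℓ : ℕ} {a b : EuclideanSpace ℝ (Fin n)} :
    ChainTo (invMap F) ℓ a b ↔ ChainTo F ℓ b a := by
  have key : ∀ (G₁ G₂ : SVMap n), (∀ x y, y ∈ G₁ x ↔ x ∈ G₂ y) →
      ∀ {u v : EuclideanSpace ℝ (Fin n)}, ChainTo G₁ ℓ u v → ChainTo G₂ ℓ v u := by
    intro G₁ G₂ hG u v hc
    obtain ⟨c, hc0, hcl, hcs⟩ := hc
    refine ⟨fun k => c (ℓ - k), by simpa using hcl, by simpa using hc0, ?_⟩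
    intro k hk
    show c (ℓ - (k + 1)) ∈ G₂ (c (ℓ - k))
    have h1 : ℓ - k = (ℓ - (k + 1)) + 1 := by omega
    have h2 := hcs (ℓ - (k + 1)) (by omega)
    rw [hG] at h2
    rw [h1]
    exact h2
  constructor
  · exact key (invMap F) F (fun x y => Iff.rfl)
  · exact key F (invMap F) (fun x y => Iff.rfl)

theorem mem_nullc_iff {F : SVMap n} {x : EuclideanSpace ℝ (Fin n)} :
    x ∈ nullc F ↔ ∃ ℓ, ChainTo F ℓ x 0 := by
  unfold nullc
  rw [mem_reach_iff]
  exact exists_congr fun ℓ => chain_invMap_iff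

variable {H : SVMap n}

theorem cp_zero (hH : IsConvexProcess H) : (0 : EuclideanSpace ℝ (Fin n)) ∈ H 0 := by
  obtain ⟨⟨p, hp⟩, -, hcone⟩ := hH
  have h := hcone 0 le_rfl p hp
  rw [zero_smul] at h
  exact h

theorem cp_add (hH : IsConvexProcess H) {x y x' y' : EuclideanSpace ℝ (Fin n)}
    (h : y ∈ H x) (h' : y' ∈ H x') : y + y' ∈ H (x + x') := by
  obtain ⟨-, hconv, hcone⟩ := hH
  have hmid : (1/2 : ℝ) • ((x, y) : _ × _) + (1/2 : ℝ) • ((x', y') : _ × _) ∈ graph H :=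
    hconv h h' (by norm_num) (by norm_num) (by norm_num)
  have h2 := hcone 2 (by norm_num) _ hmid
  have heq : (2 : ℝ) • ((1/2 : ℝ) • ((x, y) : _ × _) + (1/2 : ℝ) • ((x', y') : _ × _)) =
      ((x + x', y + y') : _ × _) := by
    rw [smul_add, smul_smul, smul_smul]
    norm_num
  rw [heq] at h2
  exact h2

theorem cp_smul (hH : IsConvexProcess H) {c : ℝ} (hc : 0 ≤ c)
    {x y : EuclideanSpace ℝ (Fin n)} (h : y ∈ H x) : c • y ∈ H (c • x) :=
  hH.2.2 c hc (x, y) h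

theorem L_sub (x : EuclideanSpace ℝ (Fin n)) : Lminus H x ⊆ H x := fun _ hy => hy.1

theorem L_zero (hH : IsConvexProcess H) :
    (0 : EuclideanSpace ℝ (Fin n)) ∈ Lminus H 0 := by
  exact ⟨cp_zero hH, by simpa using cp_zero hH⟩

theorem L_add (hH : IsConvexProcess H) {x y x' y' : EuclideanSpace ℝ (Fin n)}
    (h : y ∈ Lminus H x) (h' : y' ∈ Lminus H x') : y + y' ∈ Lminus H (x + x') := by
  refine ⟨cp_add hH h.1 h'.1, ?_⟩
  have := cp_add hH h.2 h'.2
  rwa [← neg_add, ← neg_add] at this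

theorem L_smul (hH : IsConvexProcess H) (c : ℝ) {x y : EuclideanSpace ℝ (Fin n)}
    (h : y ∈ Lminus H x) : c • y ∈ Lminus H (c • x) := by
  rcases le_or_gt 0 c with hc | hc
  · refine ⟨cp_smul hH hc h.1, ?_⟩
    have := cp_smul hH hc h.2
    rwa [smul_neg, smul_neg] at this
  · have hc' : 0 ≤ -c := by linarith
    constructor
    · have := cp_smul hH hc' h.2
      rwa [smul_neg, smul_neg, neg_smul, neg_smul, neg_neg, neg_neg] at this
    · have := cp_smul hH hc' h.1
      rwa [neg_smul, neg_smul] at this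

theorem V_zero : (0 : EuclideanSpace ℝ (Fin n)) ∈ reach (Lminus H) :=
  mem_reach_iff.2 ⟨0, chain_self _ 0⟩

theorem V_neg (hH : IsConvexProcess H) {v : EuclideanSpace ℝ (Fin n)}
    (h : v ∈ reach (Lminus H)) : -v ∈ reach (Lminus H) := by
  obtain ⟨ℓ, hc⟩ := mem_reach_iff.1 h
  refine mem_reach_iff.2 ⟨ℓ, ?_⟩
  have h' := chain_smul (-1 : ℝ) (fun hxy => L_smul hH (-1) hxy) hc
  simpa using h'

theorem V_add (hH : IsConvexProcess H) {u v : EuclideanSpace ℝ (Fin n)}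
    (hu : u ∈ reach (Lminus H)) (hv : v ∈ reach (Lminus H)) :
    u + v ∈ reach (Lminus H) := by
  obtain ⟨ℓ, hcu⟩ := mem_reach_iff.1 hu
  obtain ⟨p, hcv⟩ := mem_reach_iff.1 hv
  have hcu' := chain_pad_front (L_zero hH) (le_max_left ℓ p) hcu
  have hcv' := chain_pad_front (L_zero hH) (le_max_right ℓ p) hcv
  have h' := chain_add (fun h1 h2 => L_add hH h1 h2) hcu' hcv'
  refine mem_reach_iff.2 ⟨max ℓ p, ?_⟩
  simpa using h'

theorem V_sub (hH : IsConvexProcess H) {u v : EuclideanSpace ℝ (Fin n)}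
    (hu : u ∈ reach (Lminus H)) (hv : v ∈ reach (Lminus H)) :
    u - v ∈ reach (Lminus H) := by
  rw [sub_eq_add_neg]
  exact V_add hH hu (V_neg hH hv)

theorem V_sub_reach {v : EuclideanSpace ℝ (Fin n)} (h : v ∈ reach (Lminus H)) :
    v ∈ reach H := by
  obtain ⟨ℓ, hc⟩ := mem_reach_iff.1 h
  exact mem_reach_iff.2 ⟨ℓ, chain_mono L_sub hc⟩

/-- Stabilization of the reachable subspaces of the minimal linear process. -/
theorem exists_uniform_length (hH : IsConvexProcess H) :
    ∃ m : ℕ, ∀ v ∈ reach (Lminus H), ChainTo (Lminus H) m 0 v := by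
  let W : ℕ → Submodule ℝ (EuclideanSpace ℝ (Fin n)) := fun j =>
    { carrier := {v | ChainTo (Lminus H) j 0 v}
      add_mem' := fun hu hv => by
        have := chain_add (fun h1 h2 => L_add hH h1 h2) hu hv
        simpa using this
      zero_mem' := chain_const (L_zero hH) j
      smul_mem' := fun c v hv => by
        have := chain_smul c (fun hxy => L_smul hH c hxy) hv
        simpa using this }
  have hmono : Monotone W := by
    apply monotone_nat_of_le_succ
    intro j v hv
    exact chain_pad_front (L_zero hH) (Nat.le_succ j) hv
  obtain ⟨m, hm⟩ := monotone_stabilizes_iff_noetherian.2 inferInstance ⟨W, hmono⟩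
  refine ⟨m, ?_⟩
  intro v hv
  obtain ⟨ℓ, hc⟩ := mem_reach_iff.1 hv
  rcases le_or_gt ℓ m with hlm | hml
  · exact chain_pad_front (L_zero hH) hlm hc
  · have hEq : W m = W ℓ := hm ℓ (le_of_lt hml)
    have : v ∈ W m := by
      rw [hEq]
      exact hc
    exact this

theorem decomp (hdom : dom H + reach (Lminus H) = Set.univ)
    (x : EuclideanSpace ℝ (Fin n)) :
    ∃ d r, (H d).Nonempty ∧ r ∈ reach (Lminus H) ∧ d + r = x := by
  have hx : x ∈ dom H + reach (Lminus H) := by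
    rw [hdom]
    trivial
  rw [Set.mem_add] at hx
  obtain ⟨d, hd, r, hr, h⟩ := hx
  exact ⟨d, r, hd, hr, h⟩

/-- Lemma A: every point is, modulo `R₋`, the start of a chain of any given length. -/
theorem lemA (hH : IsConvexProcess H) (hdom : dom H + reach (Lminus H) = Set.univ) :
    ∀ (ℓ : ℕ) (x : EuclideanSpace ℝ (Fin n)),
      ∃ u, (∃ b, ChainTo H ℓ u b) ∧ x - u ∈ reach (Lminus H) := by
  intro ℓ
  induction ℓ with
  | zero =>
    intro x
    refine ⟨x, ⟨x, chain_self H x⟩, ?_⟩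
    rw [sub_self]
    exact V_zero
  | succ ℓ ih =>
    intro x
    obtain ⟨d, r, ⟨y, hy⟩, hr, hdr⟩ := decomp hdom x
    obtain ⟨d', ⟨b', hb'⟩, hyd'⟩ := ih y
    have hneg : d' - y ∈ reach (Lminus H) := by
      have := V_neg hH hyd'
      rwa [neg_sub] at this
    obtain ⟨q, hq⟩ := mem_reach_iff.1 hneg
    cases q with
    | zero =>
      obtain ⟨c, hc0, hcq, -⟩ := hq
      have hde : d' = y := by
        have h0 : d' - y = 0 := by rw [← hcq, hc0]
        exact sub_eq_zero.1 h0
      refine ⟨d, ⟨b', ?_⟩, ?_⟩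
      · have hstep : ChainTo H 1 d y := chain_single hy
        have h' := chain_concat hstep (hde ▸ hb')
        rwa [add_comm 1 ℓ] at h'
      · have hxd : x - d = r := by rw [← hdr]; abel
        rw [hxd]
        exact hr
    | succ s =>
      obtain ⟨c, hc0, hcq, hcs⟩ := hq
      have hz : c s ∈ reach (Lminus H) :=
        mem_reach_iff.2 ⟨s, c, hc0, rfl, fun k hk => hcs k (by omega)⟩
      have hstepL : d' - y ∈ Lminus H (c s) := hcq ▸ hcs s (by omega)
      have hsum : y + (d' - y) ∈ H (d + c s) := cp_add hH hy hstepL.1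
      have h5 : y + (d' - y) = d' := by abel
      rw [h5] at hsum
      refine ⟨d + c s, ⟨b', ?_⟩, ?_⟩
      · have hstep : ChainTo H 1 (d + c s) d' := chain_single hsum
        have h' := chain_concat hstep hb'
        rwa [add_comm 1 ℓ] at h'
      · have hxd : x - (d + c s) = r - c s := by rw [← hdr]; abel
        rw [hxd]
        exact V_sub hH hr hz

/-- The key step lemma: within `dom H^{m+1}`, one can take `m+1` steps and stay there. -/
theorem step_lemma (hH : IsConvexProcess H) (hdom : dom H + reach (Lminus H) = Set.univ)
    {m : ℕ} (hm : ∀ v ∈ reach (Lminus H), ChainTo (Lminus H) (m + 1) 0 v) :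
    ∀ u : EuclideanSpace ℝ (Fin n), (∃ b, ChainTo H (m + 1) u b) →
      ∃ u', (∃ b, ChainTo H (m + 1) u' b) ∧ ChainTo H (m + 1) u u' := by
  rintro u ⟨y, hc⟩
  obtain ⟨d', hd', hyd'⟩ := lemA hH hdom (m + 1) y
  have hneg : d' - y ∈ reach (Lminus H) := by
    have := V_neg hH hyd'
    rwa [neg_sub] at this
  have hchainL : ChainTo (Lminus H) (m + 1) 0 (d' - y) := hm _ hneg
  have hchainH : ChainTo H (m + 1) 0 (d' - y) := chain_mono L_sub hchainL
  have hsum := chain_add (fun h1 h2 => cp_add hH h1 h2) hc hchainH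
  refine ⟨d', hd', ?_⟩
  have he1 : u + 0 = u := add_zero u
  have he2 : y + (d' - y) = d' := by abel
  rwa [he1, he2] at hsum

/-- Every point is, modulo `R₋`, feasible. -/
theorem feas_cover (hH : IsConvexProcess H) (hdom : dom H + reach (Lminus H) = Set.univ) :
    ∀ x : EuclideanSpace ℝ (Fin n), ∃ u ∈ feas H, x - u ∈ reach (Lminus H) := by
  classical
  obtain ⟨m, hm⟩ := exists_uniform_length hH
  have hm1 : ∀ v ∈ reach (Lminus H), ChainTo (Lminus H) (m + 1) 0 v := fun v hv =>
    chain_pad_front (L_zero hH) (Nat.le_succ m) (hm v hv)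
  intro x
  obtain ⟨u₀, hu₀, hxu₀⟩ := lemA hH hdom (m + 1) x
  refine ⟨u₀, ?_, hxu₀⟩
  have hstep := step_lemma hH hdom hm1
  let P : EuclideanSpace ℝ (Fin n) → Prop := fun u => ∃ b, ChainTo H (m + 1) u b
  let next : {v : EuclideanSpace ℝ (Fin n) // P v} → {v : EuclideanSpace ℝ (Fin n) // P v} :=
    fun u => ⟨Classical.choose (hstep u.1 u.2), (Classical.choose_spec (hstep u.1 u.2)).1⟩
  have nextchain : ∀ u : {v : EuclideanSpace ℝ (Fin n) // P v},
      ChainTo H (m + 1) u.1 (next u).1 := fun u => (Classical.choose_spec (hstep u.1 u.2)).2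
  let U : ℕ → {v : EuclideanSpace ℝ (Fin n) // P v} := fun j =>
    Nat.rec ⟨u₀, hu₀⟩ (fun _ v => next v) j
  have hU : ∀ j, U (j + 1) = next (U j) := fun j => rfl
  have hCh : ∀ j, ∃ c : ℕ → EuclideanSpace ℝ (Fin n),
      c 0 = (U j).1 ∧ c (m + 1) = (U (j + 1)).1 ∧ ∀ k < m + 1, c (k + 1) ∈ H (c k) := by
    intro j
    rw [hU j]
    exact nextchain (U j)
  choose cfun h0 h1 hstep2 using hCh
  refine ⟨fun k => cfun (k / (m + 1)) (k % (m + 1)), ?_, ?_⟩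
  · show cfun (0 / (m + 1)) (0 % (m + 1)) = u₀
    rw [Nat.zero_div, Nat.zero_mod, h0 0]
    rfl
  · intro k
    show cfun ((k + 1) / (m + 1)) ((k + 1) % (m + 1)) ∈
      H (cfun (k / (m + 1)) (k % (m + 1)))
    have hk := Nat.div_add_mod k (m + 1)
    set j := k / (m + 1) with hj
    set i := k % (m + 1) with hi'
    have hi : i < m + 1 := Nat.mod_lt _ (Nat.succ_pos m)
    by_cases hcase : i = m
    · have e1 : k + 1 = (m + 1) * (j + 1) := by
        rw [Nat.mul_succ, ← hk, hcase]
        exact add_assoc _ m 1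
      have hdiv : (k + 1) / (m + 1) = j + 1 := by
        rw [e1, Nat.mul_div_cancel_left _ (Nat.succ_pos m)]
      have hmod : (k + 1) % (m + 1) = 0 := by
        rw [e1, Nat.mul_mod_right]
      rw [hdiv, hmod, hcase, h0 (j + 1), ← h1 j]
      exact hstep2 j m (Nat.lt_succ_self m)
    · have e1 : k + 1 = (m + 1) * j + (i + 1) := by
        rw [← hk]
        exact add_assoc _ i 1
      have hdiv : (k + 1) / (m + 1) = j := by
        rw [e1, Nat.mul_add_div (Nat.succ_pos m), Nat.div_eq_of_lt (by omega)]
        exact Nat.add_zero j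
      have hmod : (k + 1) % (m + 1) = i + 1 := by
        rw [e1, Nat.mul_add_mod, Nat.mod_eq_of_lt (by omega)]
      rw [hdiv, hmod]
      exact hstep2 j i hi

theorem eucl_sum (x : EuclideanSpace ℝ (Fin n)) :
    x = ∑ i, x i • EuclideanSpace.single i (1 : ℝ) := by
  ext j
  have hsum : (∑ i, x i • EuclideanSpace.single i (1 : ℝ)) j
      = ∑ i, (x i • EuclideanSpace.single i (1 : ℝ)) j := by
    rw [WithLp.ofLp_sum]
    exact Finset.sum_apply j Finset.univ _
  rw [hsum]
  simp [EuclideanSpace.single_apply]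

end Aux

/-- H is null-controllable iff N(H) − R(H) = ℝⁿ. -/
theorem nullcontrollable_iff_sub_univ {n : ℕ} (H : SVMap n) (hH : IsConvexProcess H)
    (hdom : dom H + reach (Lminus H) = Set.univ) :
    IsNullControllable H ↔ nullc H - reach H = Set.univ := by
  classical
  constructor
  · -- forward direction
    intro hnc
    ext x
    simp only [Set.mem_univ, iff_true]
    obtain ⟨u, hu, hxu⟩ := feas_cover hH hdom x
    rw [Set.mem_sub]
    refine ⟨u, hnc hu, u - x, ?_, by abel⟩
    have h' : u - x ∈ reach (Lminus H) := by
      have := V_neg hH hxu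
      rwa [neg_sub] at this
    exact V_sub_reach h'
  · -- backward direction
    intro hyp
    have hx : ∀ x : EuclideanSpace ℝ (Fin n), ∃ a ∈ nullc H, ∃ b ∈ reach H, a - b = x := by
      intro x
      have hmem : x ∈ nullc H - reach H := by
        rw [hyp]
        trivial
      rwa [Set.mem_sub] at hmem
    -- choose decompositions of the ±basis vectors
    have hgen : ∀ (v : EuclideanSpace ℝ (Fin n)), ∃ K a b,
        (∃ p, ChainTo H p a 0) ∧ ChainTo H K 0 b ∧ a - b = v := by
      intro v
      obtain ⟨a, ha, b, hb, hab⟩ := hx v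
      obtain ⟨p, hp⟩ := mem_nullc_iff.1 ha
      obtain ⟨K, hK⟩ := mem_reach_iff.1 hb
      exact ⟨K, a, b, ⟨p, hp⟩, hK, hab⟩
    choose K1 a1 b1 ha1 hb1 hab1 using
      fun i : Fin n => hgen (EuclideanSpace.single i (1 : ℝ))
    choose K2 a2 b2 ha2 hb2 hab2 using
      fun i : Fin n => hgen (-(EuclideanSpace.single i (1 : ℝ)))
    set K : ℕ := Finset.univ.sup (fun i : Fin n => max (K1 i) (K2 i)) with hKdef
    have hK1 : ∀ i, K1 i ≤ K := fun i =>
      le_trans (le_max_left _ _)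
        (Finset.le_sup (f := fun i : Fin n => max (K1 i) (K2 i)) (Finset.mem_univ i))
    have hK2 : ∀ i, K2 i ≤ K := fun i =>
      le_trans (le_max_right _ _)
        (Finset.le_sup (f := fun i : Fin n => max (K1 i) (K2 i)) (Finset.mem_univ i))
    set NK : Set (EuclideanSpace ℝ (Fin n)) :=
      {x | ∃ a, (∃ p, ChainTo H p a 0) ∧ ∃ b, ChainTo H K 0 b ∧ a - b = x} with hNKdef
    have hNK_add : ∀ x ∈ NK, ∀ y ∈ NK, x + y ∈ NK := by
      rintro x ⟨a, ⟨p, hp⟩, b, hb, rfl⟩ y ⟨a', ⟨p', hp'⟩, b', hb', rfl⟩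
      refine ⟨a + a', ⟨max p p', ?_⟩, b + b', ?_, by abel⟩
      · have hpa := chain_pad_back (cp_zero hH) (le_max_left p p') hp
        have hpa' := chain_pad_back (cp_zero hH) (le_max_right p p') hp'
        have h' := chain_add (fun h1 h2 => cp_add hH h1 h2) hpa hpa'
        simpa using h'
      · have h' := chain_add (fun h1 h2 => cp_add hH h1 h2) hb hb'
        simpa using h'
    have hNK_smul : ∀ (c : ℝ), 0 ≤ c → ∀ x ∈ NK, c • x ∈ NK := by
      rintro c hc x ⟨a, ⟨p, hp⟩, b, hb, rfl⟩
      refine ⟨c • a, ⟨p, ?_⟩, c • b, ?_, by rw [smul_sub]⟩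
      · have h' := chain_smul c (fun h => cp_smul hH hc h) hp
        simpa using h'
      · have h' := chain_smul c (fun h => cp_smul hH hc h) hb
        simpa using h'
    have hNK_zero : (0 : EuclideanSpace ℝ (Fin n)) ∈ NK :=
      ⟨0, ⟨0, chain_self H 0⟩, 0, chain_const (cp_zero hH) K, sub_zero 0⟩
    have hNK_gen1 : ∀ i, EuclideanSpace.single i (1 : ℝ) ∈ NK := fun i =>
      ⟨a1 i, ha1 i, b1 i, chain_pad_front (cp_zero hH) (hK1 i) (hb1 i), hab1 i⟩
    have hNK_gen2 : ∀ i, -(EuclideanSpace.single i (1 : ℝ)) ∈ NK := fun i =>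
      ⟨a2 i, ha2 i, b2 i, chain_pad_front (cp_zero hH) (hK2 i) (hb2 i), hab2 i⟩
    have hall : ∀ x : EuclideanSpace ℝ (Fin n), x ∈ NK := by
      intro x
      rw [eucl_sum x]
      refine Finset.sum_induction _ (· ∈ NK) (fun a b ha hb => hNK_add a ha b hb)
        hNK_zero ?_
      intro i _
      rcases le_or_gt 0 (x i) with hxi | hxi
      · exact hNK_smul (x i) hxi _ (hNK_gen1 i)
      · have heq : x i • EuclideanSpace.single i (1 : ℝ)
            = (-(x i)) • (-(EuclideanSpace.single i (1 : ℝ))) := by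
          rw [neg_smul_neg]
        rw [heq]
        exact hNK_smul (-(x i)) (by linarith) _ (hNK_gen2 i)
    -- now prove null-controllability
    intro ξ hξ
    obtain ⟨t, ht0, hts⟩ := hξ
    obtain ⟨a, ⟨p, hp⟩, b, hb, hab⟩ := hall (t K)
    have hpre : ChainTo H K ξ (t K) := ⟨t, ht0, rfl, fun k _ => hts k⟩
    have hsum := chain_add (fun h1 h2 => cp_add hH h1 h2) hpre hb
    have he1 : ξ + 0 = ξ := add_zero ξ
    have he2 : t K + b = a := by rw [← hab]; abel
    rw [he1, he2] at hsum
    exact mem_nullc_iff.2 ⟨K + p, chain_concat hsum hp⟩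

end ConvexProcessPaper
end

section
/- Let H : ℝⁿ ⇉ ℝⁿ be a convex process. Then the reachable set R(H) is a strongly H invariant convex cone, and R(H) is contained in every strongly H invariant convex cone; that is, R(H) is the smallest strongly H invariant convex cone. -/
open Pointwise Set RealInnerProductSpace

namespace ConvexProcessPaper

variable {n : ℕ}

lemma zero_mem_zero (H : SVMap n) (hH : IsConvexProcess H) : (0 : EuclideanSpace ℝ (Fin n)) ∈ H 0 := by
  obtain ⟨⟨p, hp⟩, _, hsmul⟩ := hH
  have := hsmul 0 le_rfl p hp
  simpa [graph, Prod.smul_def] using this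

lemma imSet_mono (H : SVMap n) {S T : Set (EuclideanSpace ℝ (Fin n))} (h : S ⊆ T) :
    imSet H S ⊆ imSet H T := by
  intro y hy
  obtain ⟨x, hx, hxy⟩ := by simpa [imSet] using hy
  exact mem_biUnion (h hx) hxy

lemma imSet_convexCone (H : SVMap n) (hH : IsConvexProcess H)
    {S : Set (EuclideanSpace ℝ (Fin n))} (hS : IsConvexCone S) (h0 : (0:EuclideanSpace ℝ (Fin n)) ∈ S) :
    IsConvexCone (imSet H S) ∧ (0:EuclideanSpace ℝ (Fin n)) ∈ imSet H S := by
  have hconv := hH.2.1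
  have hsmul := hH.2.2
  have h0' : (0:EuclideanSpace ℝ (Fin n)) ∈ imSet H S :=
    mem_biUnion h0 (zero_mem_zero H hH)
  refine ⟨⟨⟨0, h0'⟩, ?_, ?_⟩, h0'⟩
  · intro y₁ hy₁ y₂ hy₂ a b ha hb hab
    obtain ⟨x₁, hx₁, hxy₁⟩ := by simpa [imSet] using hy₁
    obtain ⟨x₂, hx₂, hxy₂⟩ := by simpa [imSet] using hy₂
    have hg : a • ((x₁, y₁) : _ × _) + b • (x₂, y₂) ∈ graph H :=
      hconv hxy₁ hxy₂ ha hb hab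
    have hx : a • x₁ + b • x₂ ∈ S := hS.2.1 hx₁ hx₂ ha hb hab
    exact mem_biUnion hx (by simpa [graph, Prod.smul_def] using hg)
  · intro c hc y hy
    obtain ⟨x, hx, hxy⟩ := by simpa [imSet] using hy
    have hg : c • ((x, y) : _ × _) ∈ graph H := hsmul c hc _ hxy
    exact mem_biUnion (hS.2.2 c hc x hx) (by simpa [graph, Prod.smul_def] using hg)

lemma iter_convexCone (H : SVMap n) (hH : IsConvexProcess H) (ℓ : ℕ) :
    IsConvexCone ((imSet H)^[ℓ] {0}) ∧ (0:EuclideanSpace ℝ (Fin n)) ∈ (imSet H)^[ℓ] {0} := by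
  induction ℓ with
  | zero =>
    refine ⟨⟨⟨0, rfl⟩, ?_, ?_⟩, rfl⟩
    · simpa using convex_singleton (0 : EuclideanSpace ℝ (Fin n))
    · rintro c _ x rfl; simp
  | succ ℓ ih =>
    rw [Function.iterate_succ_apply']
    exact imSet_convexCone H hH ih.1 ih.2

lemma iter_mono (H : SVMap n) (hH : IsConvexProcess H) :
    Monotone (fun ℓ => (imSet H)^[ℓ] ({0} : Set (EuclideanSpace ℝ (Fin n)))) := by
  apply monotone_nat_of_le_succ
  intro ℓ
  induction ℓ with
  | zero =>
    rintro x rfl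
    exact mem_biUnion rfl (zero_mem_zero H hH)
  | succ ℓ ih =>
    rw [Function.iterate_succ_apply', Function.iterate_succ_apply']
    exact imSet_mono H ih

/-- R(H) is the smallest strongly H invariant convex cone. -/
theorem reach_smallest_stronglyInv {n : ℕ} (H : SVMap n) (hH : IsConvexProcess H) :
    IsConvexCone (reach H) ∧ StronglyInv H (reach H) ∧
      ∀ C : Set (EuclideanSpace ℝ (Fin n)), IsConvexCone C → StronglyInv H C → reach H ⊆ C := by
  refine ⟨⟨⟨0, mem_iUnion.2 ⟨0, rfl⟩⟩, ?_, ?_⟩, ?_, ?_⟩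
  · -- convex
    intro y₁ hy₁ y₂ hy₂ a b ha hb hab
    obtain ⟨ℓ₁, h₁⟩ := mem_iUnion.1 hy₁
    obtain ⟨ℓ₂, h₂⟩ := mem_iUnion.1 hy₂
    have h₁' : y₁ ∈ (imSet H)^[max ℓ₁ ℓ₂] {0} := iter_mono H hH (le_max_left _ _) h₁
    have h₂' : y₂ ∈ (imSet H)^[max ℓ₁ ℓ₂] {0} := iter_mono H hH (le_max_right _ _) h₂
    exact mem_iUnion.2 ⟨max ℓ₁ ℓ₂,
      (iter_convexCone H hH _).1.2.1 h₁' h₂' ha hb hab⟩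
  · -- cone
    intro c hc x hx
    obtain ⟨ℓ, hℓ⟩ := mem_iUnion.1 hx
    exact mem_iUnion.2 ⟨ℓ, (iter_convexCone H hH ℓ).1.2.2 c hc x hℓ⟩
  · -- strongly invariant
    intro x hx y hy
    obtain ⟨ℓ, hℓ⟩ := mem_iUnion.1 hx
    refine mem_iUnion.2 ⟨ℓ + 1, ?_⟩
    rw [Function.iterate_succ_apply']
    exact mem_biUnion hℓ hy
  · -- minimality
    intro C hC hCinv x hx
    obtain ⟨ℓ, hℓ⟩ := mem_iUnion.1 hx
    have h0C : (0 : EuclideanSpace ℝ (Fin n)) ∈ C := by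
      obtain ⟨p, hp⟩ := hC.1
      simpa using hC.2.2 0 le_rfl p hp
    have key : ∀ m : ℕ, ∀ y, y ∈ (imSet H)^[m] ({0} : Set (EuclideanSpace ℝ (Fin n))) → y ∈ C := by
      intro m
      induction m with
      | zero => rintro y rfl; exact h0C
      | succ m ih =>
        intro y hy
        rw [Function.iterate_succ_apply'] at hy
        obtain ⟨z, hz, hyz⟩ := by simpa [imSet] using hy
        exact hCinv z (ih z hz) hyz
    exact key ℓ x hℓ


end ConvexProcessPaper
end
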